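/- For α > 0, if a real polynomial p has all its zeros positive and simple, then the polynomial Λ_α p defined by (Λ_α p)(x) = x p'(x) + (α − x) p(x) has all its zeros positive and simple, and the zeros of Λ_α p interlace the zeros of p. -/
import Mathlib


open Polynomial Finset Filter

lemma ivt_sign {f : ℝ → ℝ} (hf : Continuous f) {a b : ℝ} (hab : a < b)
    (h : f a * f b < 0) : ∃ t ∈ Set.Ioo a b, f t = 0 := by
  rcases mul_neg_iff.1 h with ⟨ha, hb⟩ | ⟨ha, hb⟩
  · obtain ⟨t, ht, hft⟩ := intermediate_value_Ioo' hab.le hf.continuousOn ⟨hb, ha⟩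
    exact ⟨t, ht, hft⟩
  · obtain ⟨t, ht, hft⟩ := intermediate_value_Ioo hab.le hf.continuousOn ⟨ha, hb⟩
    exact ⟨t, ht, hft⟩

lemma key_sign (u v : Finset ℕ) (huv : Disjoint u v) (g : ℕ → ℝ)
    (hu : ∀ j ∈ u, 0 < g j) (hv : ∀ j ∈ v, g j < 0) :
    0 < (-1 : ℝ) ^ v.card * ∏ j ∈ u ∪ v, g j := by
  rw [Finset.prod_union huv]
  have h1 : 0 < ∏ j ∈ u, g j := Finset.prod_pos hu
  have h2 : ∏ j ∈ v, g j = (-1 : ℝ) ^ v.card * ∏ j ∈ v, (-g j) := by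
    rw [← Finset.prod_const, ← Finset.prod_mul_distrib]
    simp
  have h3 : 0 < ∏ j ∈ v, (-g j) := Finset.prod_pos fun j hj => neg_pos.2 (hv j hj)
  have h4 : (-1 : ℝ) ^ v.card * (-1 : ℝ) ^ v.card = 1 := by
    rw [← pow_add, ← two_mul, pow_mul]; norm_num
  rw [h2]
  nlinarith [mul_pos h1 h3, h4]

/-- For `α > 0`, if all zeros of `p` are positive and simple, then all zeros of
`Λ_α p = x p' + (α - x) p` are positive and simple, and they interlace the zeros of `p`. -/
theorem stmt_3 (α : ℝ) (hα : 0 < α) (p : Polynomial ℝ) (hp : p ≠ 0)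
    (n : ℕ) (hn : p.natDegree = n) (x : ℕ → ℝ)
    (hx : StrictMonoOn x (Set.Iio n)) (hpr : p.roots = (Multiset.range n).map x)
    (hpos : ∀ i < n, 0 < x i) :
    ∃ y : ℕ → ℝ, StrictMonoOn y (Set.Iio (n + 1)) ∧
      (Polynomial.X * Polynomial.derivative p + (Polynomial.C α - Polynomial.X) * p).roots
        = (Multiset.range (n + 1)).map y ∧
      (∀ i < n + 1, 0 < y i) ∧
      (∀ i < n, y i < x i ∧ x i < y (i + 1)) := by
  set c := p.leadingCoeff with hc_def
  have hc : c ≠ 0 := leadingCoeff_ne_zero.2 hp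
  have hc2 : 0 < c * c := mul_self_pos.2 hc
  have hxlt : ∀ i j, i < j → j < n → x i < x j := fun i j hij hj =>
    hx (Set.mem_Iio.2 (by omega)) (Set.mem_Iio.2 hj) hij
  have hcard : Multiset.card p.roots = p.natDegree := by
    rw [hpr, Multiset.card_map, Multiset.card_range, hn]
  have hevalp : ∀ t : ℝ, eval t p = c * ∏ j ∈ range n, (t - x j) := by
    intro t
    conv_lhs => rw [← C_leadingCoeff_mul_prod_multiset_X_sub_C hcard]
    rw [hpr, Multiset.map_map, eval_mul, eval_C,
      Finset.prod_eq_multiset_prod, Finset.range_val]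
    congr 1
    have := (evalRingHom t).map_multiset_prod
      (Multiset.map ((fun a => X - C a) ∘ x) (Multiset.range n))
    simpa [Multiset.map_map, Function.comp] using this
  have hder : ∀ i < n, eval (x i) (derivative p)
      = c * ∏ j ∈ (range n).erase i, (x i - x j) := by
    intro i hi
    have hmem : i ∈ Multiset.range n := Multiset.mem_range.2 hi
    have hr : x i ∈ (Multiset.range n).map x := Multiset.mem_map_of_mem x hmem
    have herase : ((Multiset.range n).map x).erase (x i)
        = ((Multiset.range n).erase i).map x := by
      conv_lhs => rw [← Multiset.cons_erase hmem]
      rw [Multiset.map_cons, Multiset.erase_cons_head]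
    have hfac' : p = C c * (((Multiset.range n).map x).map fun a => X - C a).prod := by
      conv_lhs => rw [← C_leadingCoeff_mul_prod_multiset_X_sub_C hcard]
      rw [hpr]
    conv_lhs => rw [hfac', derivative_C_mul, eval_mul, eval_C,
      eval_multiset_prod_X_sub_C_derivative hr, herase, Multiset.map_map]
    rw [Finset.prod_eq_multiset_prod, Finset.erase_val, Finset.range_val]
    rfl
  set q := Polynomial.X * Polynomial.derivative p + (Polynomial.C α - Polynomial.X) * p
    with hq_def
  have hevalq : ∀ t : ℝ, eval t q
      = t * eval t (derivative p) + (α - t) * eval t p := by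
    intro t; simp [hq_def]
  have hrootp : ∀ i < n, eval (x i) p = 0 := by
    intro i hi
    have : x i ∈ p.roots := by
      rw [hpr]
      exact Multiset.mem_map_of_mem x (Multiset.mem_range.2 hi)
    exact (mem_roots'.1 this).2
  -- coefficient and degree facts
  have hq1 : q.coeff (n+1) = -c := by
    have h1 : p.coeff (n+1) = 0 := coeff_eq_zero_of_natDegree_lt (by omega)
    have h2 : p.coeff n = c := by rw [hc_def, ← hn, coeff_natDegree]
    rw [hq_def, sub_mul, coeff_add, coeff_sub, coeff_X_mul, coeff_X_mul, coeff_C_mul,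
      coeff_derivative, h1, h2]
    ring
  have hqdle : q.natDegree ≤ n + 1 := by
    apply le_trans (natDegree_add_le _ _)
    apply max_le
    · apply le_trans (natDegree_mul_le)
      have := p.natDegree_derivative_le
      simp only [natDegree_X]
      omega
    · apply le_trans (natDegree_mul_le)
      have h3 : (Polynomial.C α - Polynomial.X).natDegree ≤ 1 := by
        apply le_trans (natDegree_sub_le _ _)
        simp
      omega
  have hqnd : q.natDegree = n + 1 :=
    le_antisymm hqdle (le_natDegree_of_ne_zero (by rw [hq1]; exact neg_ne_zero.2 hc))
  have hq0 : q ≠ 0 := by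
    intro h
    rw [h, coeff_zero] at hq1
    exact hc (by linarith)
  have hqlc : q.leadingCoeff = -c := by rw [leadingCoeff, hqnd, hq1]
  -- pick M large
  have htt : Tendsto (fun t : ℝ => eval t (Polynomial.C (-c) * q)) atTop atTop := by
    apply tendsto_atTop_of_leadingCoeff_nonneg
    · rw [degree_mul, degree_C (neg_ne_zero.2 hc), zero_add, degree_eq_natDegree hq0, hqnd]
      exact_mod_cast Nat.succ_le_succ (Nat.zero_le n)
    · rw [leadingCoeff_mul, leadingCoeff_C, hqlc]
      nlinarith [hc2]
  have hevbig : ∀ᶠ t : ℝ in atTop, ∀ i ∈ range n, x i < t :=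
    (eventually_all_finset (range n)).2 fun i _ => eventually_gt_atTop (x i)
  obtain ⟨M, hM1, hM2, hM3⟩ :=
    ((htt.eventually_gt_atTop 0).and ((eventually_gt_atTop (0:ℝ)).and hevbig)).exists
  have hMb : ∀ i < n, x i < M := fun i hi => hM3 i (Finset.mem_range.2 hi)
  have hMq : 0 < -c * eval M q := by
    rw [eval_mul, eval_C] at hM1
    exact hM1
  clear hM1 hM3 hevbig htt
  -- the partition points
  set t : ℕ → ℝ := fun k => if k = 0 then 0 else if k ≤ n then x (k-1) else M with ht_def
  have ht0 : t 0 = 0 := by simp [ht_def]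
  have htx : ∀ i < n, t (i+1) = x i := by
    intro i hi
    simp only [ht_def]
    rw [if_neg (by omega), if_pos (by omega)]
    norm_num
  have htM : t (n+1) = M := by
    simp only [ht_def]
    rw [if_neg (by omega), if_neg (by omega)]
  have htlt : ∀ k ≤ n, t k < t (k+1) := by
    intro k hk
    rcases Nat.eq_zero_or_pos k with rfl | hkpos
    · rw [ht0]
      rcases Nat.eq_zero_or_pos n with rfl | hn0
      · rw [htM]; exact hM2
      · rw [htx 0 hn0]; exact hpos 0 hn0
    · have htkk : t k = x (k-1) := by
        simp only [ht_def]; rw [if_neg (by omega), if_pos hk]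
      rw [htkk]
      rcases Nat.lt_or_ge k n with h | h
      · rw [htx k h]; exact hxlt (k-1) k (by omega) h
      · have hkn : k = n := by omega
        subst hkn
        rw [htM]; exact hMb (k-1) (by omega)
  have htnonneg : ∀ k, 0 ≤ t k := by
    intro k
    simp only [ht_def]
    split_ifs with h1 h2
    · exact le_refl 0
    · exact (hpos _ (by omega)).le
    · exact hM2.le
  have htle : ∀ l, l ≤ n+1 → ∀ k, k ≤ l → t k ≤ t l := by
    intro l
    induction l with
    | zero =>
      intro _ k hk
      have hk0 : k = 0 := by omega
      rw [hk0]
    | succ m ih =>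
      intro hl k hk
      rcases Nat.lt_or_ge k (m+1) with h | h
      · exact le_trans (ih (by omega) k (by omega)) (htlt m (by omega)).le
      · have hkm : k = m+1 := by omega
        rw [hkm]
  -- signs
  set σ : ℕ → ℝ := fun k => -(-1:ℝ)^(n+1-k) with hσ_def
  have hσsq : ∀ k, σ k * σ k = 1 := by
    intro k
    simp only [hσ_def, neg_mul_neg]
    rw [← pow_add, ← two_mul, pow_mul]; norm_num
  have hσflip : ∀ k ≤ n, σ k = -σ (k+1) := by
    intro k hk
    simp only [hσ_def, neg_neg]
    rw [show n+1-k = (n+1-(k+1))+1 by omega, pow_succ]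
    ring
  have hsign : ∀ k ≤ n+1, 0 < c * σ k * eval (t k) q := by
    intro k hk
    rcases Nat.eq_zero_or_pos k with rfl | hkpos
    · have hσ0 : σ 0 = (-1:ℝ)^n := by
        simp only [hσ_def, Nat.sub_zero, pow_succ]
        ring
      have hE : eval (t 0) q = α * (c * ∏ j ∈ range n, ((0:ℝ) - x j)) := by
        rw [ht0, hevalq, hevalp]; ring
      have A := key_sign ∅ (range n) (by simp) (fun j => (0:ℝ) - x j) (by simp)
        (fun j hj => by
          have := hpos j (Finset.mem_range.1 hj)
          show (0:ℝ) - x j < 0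
          linarith)
      rw [Finset.empty_union, Finset.card_range] at A
      rw [hσ0, hE]
      nlinarith [mul_pos (mul_pos hα hc2) A]
    · rcases Nat.lt_or_ge k (n+1) with hkn | hkn
      · obtain ⟨i, rfl⟩ : ∃ i, k = i + 1 := ⟨k-1, by omega⟩
        have hi : i < n := by omega
        have hσk : σ (i+1) = (-1:ℝ)^(n-1-i) := by
          simp only [hσ_def]
          rw [show n+1-(i+1) = (n-1-i)+1 by omega, pow_succ]
          ring
        have hE : eval (t (i+1)) q
            = x i * (c * ∏ j ∈ (range n).erase i, (x i - x j)) := by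
          rw [htx i hi, hevalq, hder i hi, hrootp i hi]; ring
        have herange : (range n).erase i = range i ∪ Ico (i+1) n := by
          ext j
          simp only [Finset.mem_erase, Finset.mem_range, Finset.mem_union, Finset.mem_Ico]
          omega
        have A := key_sign (range i) (Ico (i+1) n)
          (by
            rw [Finset.disjoint_left]
            intro a ha hb
            rw [Finset.mem_range] at ha
            rw [Finset.mem_Ico] at hb
            omega)
          (fun j => x i - x j)
          (fun j hj => sub_pos.2 (hxlt j i (Finset.mem_range.1 hj) hi))
          (fun j hj => by
            have h1 := Finset.mem_Ico.1 hj
            have h2 := hxlt i j (by omega) (by omega)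
            show x i - x j < 0
            linarith)
        rw [← herange, Nat.card_Ico, show n - (i+1) = n-1-i from by omega] at A
        rw [hσk, hE]
        nlinarith [mul_pos (mul_pos (hpos i hi) hc2) A]
      · have hkval : k = n+1 := by omega
        subst hkval
        have hσn : σ (n+1) = -1 := by simp [hσ_def]
        rw [hσn, htM]
        nlinarith [hMq]
  have hroot : ∀ k < n+1, ∃ z ∈ Set.Ioo (t k) (t (k+1)), eval z q = 0 := by
    intro k hk
    apply ivt_sign q.continuous (htlt k (by omega))
    have h1 := hsign k (by omega)
    have h2 := hsign (k+1) (by omega)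
    rw [hσflip k (by omega)] at h1
    have hs := hσsq (k+1)
    have heq : (c * -σ (k+1) * eval (t k) q) * (c * σ (k+1) * eval (t (k+1)) q)
        = -(c*c) * (σ (k+1) * σ (k+1)) * (eval (t k) q * eval (t (k+1)) q) := by ring
    have h4 := mul_pos h1 h2
    rw [heq, hs, mul_one] at h4
    nlinarith [h4, hc2]
  obtain ⟨y, hy⟩ : ∃ y : ℕ → ℝ,
      ∀ i < n+1, y i ∈ Set.Ioo (t i) (t (i+1)) ∧ eval (y i) q = 0 := by
    choose f hf1 hf2 using hroot
    exact ⟨fun i => if h : i < n+1 then f i h else 0,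
      fun i h => by simp only [dif_pos h]; exact ⟨hf1 i h, hf2 i h⟩⟩
  have hymono : StrictMonoOn y (Set.Iio (n+1)) := by
    intro a ha b hb hab
    have ha' : a < n+1 := ha
    have hb' : b < n+1 := hb
    have h1 := (hy a ha').1.2
    have h2 := (hy b hb').1.1
    have h3 : t (a+1) ≤ t b := htle b (by omega) (a+1) (by omega)
    linarith
  have hypos : ∀ i < n+1, 0 < y i :=
    fun i hi => lt_of_le_of_lt (htnonneg i) (hy i hi).1.1
  have hinter : ∀ i < n, y i < x i ∧ x i < y (i+1) := by
    intro i hi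
    constructor
    · have := (hy i (by omega)).1.2
      rwa [htx i hi] at this
    · have := (hy (i+1) (by omega)).1.1
      rwa [htx i hi] at this
  have hynodup : ((Multiset.range (n+1)).map y).Nodup := by
    apply Multiset.Nodup.map_on ?_ (Multiset.nodup_range _)
    intro a ha b hb hab
    exact hymono.injOn (Set.mem_Iio.2 (Multiset.mem_range.1 ha))
      (Set.mem_Iio.2 (Multiset.mem_range.1 hb)) hab
  have hle : (Multiset.range (n+1)).map y ≤ q.roots := by
    rw [Multiset.le_iff_count]
    intro a
    by_cases hmem : a ∈ (Multiset.range (n+1)).map y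
    · rw [Multiset.count_eq_one_of_mem hynodup hmem]
      obtain ⟨i, hi, rfl⟩ := Multiset.mem_map.1 hmem
      exact Multiset.one_le_count_iff_mem.2
        (mem_roots'.2 ⟨hq0, (hy i (Multiset.mem_range.1 hi)).2⟩)
    · rw [Multiset.count_eq_zero_of_notMem hmem]
      exact Nat.zero_le _
  have hcards : Multiset.card q.roots ≤ Multiset.card ((Multiset.range (n+1)).map y) := by
    rw [Multiset.card_map, Multiset.card_range]
    calc Multiset.card q.roots ≤ q.natDegree := q.card_roots'
    _ = n+1 := hqnd
  exact ⟨y, hymono, (Multiset.eq_of_le_of_card_le hle hcards).symm, hypos, hinter⟩
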